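/- Let F ⊆ K be fields, let r < k be positive integers, and let α_1, …, α_{k−2} ∈ K satisfy α_i ∉ F(α_1, …, α_{i−1}) for every i. Let A = (a_{ij}) ∈ K^{(k−r)×r} be a matrix such that a_{11} = 1 and, for all (i,j) ≠ (1,1) with 1 ≤ i ≤ k−r and 1 ≤ j ≤ r, a_{ij} ∈ F(α_1, …, α_{i+j−2}) \ F(α_1, …, α_{i+j−3}). Then any r row vectors of the k×r matrix Ā obtained by stacking A on top of the r×r identity matrix I_r are linearly independent over K. -/

import Mathlib

/-- The `k × r` matrix `Ā = [A; I_r]` obtained by stacking `A ∈ K^{(k-r)×r}` on top of the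
`r × r` identity matrix. -/
def stackId {K : Type*} [Zero K] [One K] (k r : ℕ) (A : Matrix (Fin (k - r)) (Fin r) K) :
    Matrix (Fin k) (Fin r) K :=
  Matrix.of fun i j =>
    if h : (i : ℕ) < k - r then A ⟨i, h⟩ j
    else if (i : ℕ) = k - r + (j : ℕ) then 1 else 0



lemma det_mem_subfield {K : Type*} [Field K] {n : ℕ} (S : Subfield K)
    (M : Matrix (Fin n) (Fin n) K) (h : ∀ i j, M i j ∈ S) : M.det ∈ S := by
  rw [Matrix.det_apply]
  refine sum_mem fun σ _ => ?_
  rw [Units.smul_def, zsmul_eq_mul]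
  exact S.mul_mem (S.intCast_mem _) (prod_mem fun i _ => h _ _)

lemma key_det {K : Type*} [Field K] (L : ℕ → Subfield K) (hL : Monotone L) :
    ∀ (s : ℕ) (ρ γ : Fin s → ℕ), StrictMono ρ → StrictMono γ →
    ∀ B : Matrix (Fin s) (Fin s) K,
    (∀ t u, B t u ∈ L (ρ t + γ u)) →
    (∀ t u, 1 ≤ ρ t + γ u → B t u ∉ L (ρ t + γ u - 1)) →
    (∀ t u, ρ t + γ u = 0 → B t u ≠ 0) →
    B.det ≠ 0 := by
  intro s
  induction s with
  | zero => intro ρ γ _ _ B _ _ _; simp [Matrix.det_fin_zero]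
  | succ s IH =>
    intro ρ γ hρ hγ B h1 h2 h3
    cases s with
    | zero =>
      rw [Matrix.det_fin_one]
      rcases Nat.eq_zero_or_pos (ρ 0 + γ 0) with h | h
      · exact h3 0 0 h
      · intro hz
        exact h2 0 0 h (hz ▸ (L _).zero_mem)
    | succ s =>
      have h0lt : (0 : Fin (s + 2)) < Fin.last (s + 1) := by
        rw [Fin.lt_def]; simp
      have hρlast : 1 ≤ ρ (Fin.last (s + 1)) := lt_of_le_of_lt (Nat.zero_le _) (hρ h0lt)
      have hγlast : 1 ≤ γ (Fin.last (s + 1)) := lt_of_le_of_lt (Nat.zero_le _) (hγ h0lt)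
      set N := ρ (Fin.last (s + 1)) + γ (Fin.last (s + 1)) with hN
      have hrow : ∀ t : Fin (s + 1), ρ (Fin.castSucc t) ≤ ρ (Fin.last (s + 1)) - 1 :=
        fun t => by have := hρ (Fin.castSucc_lt_last t); omega
      have hcol : ∀ u : Fin (s + 2), γ u ≤ γ (Fin.last (s + 1)) := fun u =>
        hγ.monotone (Fin.le_last u)
      have hminor : ∀ j : Fin (s + 2),
          (B.submatrix (Fin.last (s + 1)).succAbove j.succAbove).det ∈ L (N - 1) := by
        intro j
        refine det_mem_subfield _ _ fun t u => ?_
        rw [Matrix.submatrix_apply, Fin.succAbove_last]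
        refine hL ?_ (h1 _ _)
        have := hrow t
        have := hcol (j.succAbove u)
        omega
      set D := (B.submatrix (Fin.last (s + 1)).succAbove (Fin.last (s + 1)).succAbove).det
        with hD
      have hDne : D ≠ 0 := by
        rw [hD]
        refine IH (ρ ∘ Fin.castSucc) (γ ∘ Fin.castSucc)
          (hρ.comp Fin.strictMono_castSucc) (hγ.comp Fin.strictMono_castSucc) _
          (fun t u => ?_) (fun t u h => ?_) (fun t u h => ?_) <;>
          simp only [Matrix.submatrix_apply, Fin.succAbove_last, Function.comp_apply]
        · exact h1 _ _
        · exact h2 _ _ h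
        · exact h3 _ _ (by simpa using h)
      have hDmem : D ∈ L (N - 1) := hminor (Fin.last (s + 1))
      rw [Matrix.det_succ_row B (Fin.last (s + 1))]
      rw [← Finset.sum_erase_add _ _ (Finset.mem_univ (Fin.last (s + 1)))]
      intro hzero
      set R := ∑ j ∈ Finset.univ.erase (Fin.last (s + 1)),
          (-1 : K) ^ ((Fin.last (s + 1) : ℕ) + (j : ℕ)) * B (Fin.last (s + 1)) j *
            (B.submatrix (Fin.last (s + 1)).succAbove j.succAbove).det with hRdef
      have hR : R ∈ L (N - 1) := by
        rw [hRdef]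
        refine sum_mem fun j hj => ?_
        refine (L _).mul_mem ((L _).mul_mem ?_ ?_) (hminor j)
        · exact (L _).pow_mem ((L _).neg_mem (L _).one_mem) _
        · refine hL ?_ (h1 (Fin.last (s + 1)) j)
          have hjlt : j < Fin.last (s + 1) :=
            lt_of_le_of_ne (Fin.le_last j) (Finset.mem_erase.mp hj).1
          have := hγ hjlt
          omega
      have hBll : B (Fin.last (s + 1)) (Fin.last (s + 1)) ∉ L (N - 1) :=
        h2 _ _ (by omega)
      have hc : ((-1 : K) ^ ((Fin.last (s + 1) : ℕ) + (Fin.last (s + 1) : ℕ)) * D) ≠ 0 := by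
        simp [hDne]
      have hBeq : B (Fin.last (s + 1)) (Fin.last (s + 1)) =
          (-R) / ((-1 : K) ^ ((Fin.last (s + 1) : ℕ) + (Fin.last (s + 1) : ℕ)) * D) :=
        (eq_div_iff hc).mpr (by linear_combination hzero)
      exact hBll (hBeq ▸ (L _).div_mem ((L _).neg_mem hR)
        ((L _).mul_mem ((L _).pow_mem ((L _).neg_mem (L _).one_mem) _) hDmem))

set_option maxHeartbeats 1000000 in
/-- Let `F ⊆ K` be fields, `0 < r < k`, and `α_1, …, α_{k-2} ∈ K` with
`α_i ∉ F(α_1,…,α_{i-1})` for every `i`.  If `A ∈ K^{(k-r)×r}` has `a_{11} = 1` and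
`a_{ij} ∈ F(α_1,…,α_{i+j-2}) \ F(α_1,…,α_{i+j-3})` for `(i,j) ≠ (1,1)` (1-based indices;
here `i j : Fin _` are 0-based, so `i+j-2` becomes `i.val + j.val`), then any `r` rows of
`Ā = [A; I_r]` are linearly independent over `K`. -/
theorem stmt_1 {F K : Type*} [Field F] [Field K] [Algebra F K]
    (k r : ℕ) (hr : 0 < r) (hrk : r < k)
    (α : ℕ → K)
    (hα : ∀ i, 1 ≤ i → i ≤ k - 2 →
      α i ∉ IntermediateField.adjoin F (α '' Set.Icc 1 (i - 1)))
    (A : Matrix (Fin (k - r)) (Fin r) K)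
    (hA11 : ∀ (i : Fin (k - r)) (j : Fin r), ((i : ℕ), (j : ℕ)) = (0, 0) → A i j = 1)
    (hA : ∀ (i : Fin (k - r)) (j : Fin r), ((i : ℕ), (j : ℕ)) ≠ (0, 0) →
      A i j ∈ (IntermediateField.adjoin F (α '' Set.Icc 1 ((i : ℕ) + (j : ℕ))) : Set K) \
        (IntermediateField.adjoin F (α '' Set.Icc 1 ((i : ℕ) + (j : ℕ) - 1)) : Set K)) :
    ∀ f : Fin r → Fin k, Function.Injective f →
      LinearIndependent K fun i : Fin r => stackId k r A (f i) := by
  classical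
  intro f hf
  have hkk : k - r + r = k := Nat.sub_add_cancel hrk.le
  -- the tower of subfields
  set L : ℕ → Subfield K :=
    fun m => (IntermediateField.adjoin F (α '' Set.Icc 1 m)).toSubfield with hLdef
  have hL : Monotone L := by
    intro m m' hmm' x hx
    exact IntermediateField.adjoin.mono F _ _
      (Set.image_mono (Set.Icc_subset_Icc_right hmm')) hx
  -- translated hypotheses on A
  have hAmem : ∀ (i : Fin (k - r)) (j : Fin r), A i j ∈ L ((i : ℕ) + (j : ℕ)) := by
    intro i j
    by_cases h : ((i : ℕ), (j : ℕ)) = (0, 0)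
    · rw [hA11 i j h]; exact (L _).one_mem
    · exact (hA i j h).1
  have hAnot : ∀ (i : Fin (k - r)) (j : Fin r), 1 ≤ (i : ℕ) + (j : ℕ) →
      A i j ∉ L ((i : ℕ) + (j : ℕ) - 1) := by
    intro i j h
    have hne : ((i : ℕ), (j : ℕ)) ≠ (0, 0) := by
      intro hc; rw [Prod.ext_iff] at hc; omega
    exact (hA i j hne).2
  have hAne : ∀ (i : Fin (k - r)) (j : Fin r), (i : ℕ) + (j : ℕ) = 0 → A i j ≠ 0 := by
    intro i j h
    have := hA11 i j (by rw [Prod.ext_iff]; constructor <;> omega)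
    rw [this]; exact one_ne_zero
  rw [Fintype.linearIndependent_iff]
  intro c hc
  have hcol : ∀ j : Fin r, ∑ i : Fin r, c i * stackId k r A (f i) j = 0 := by
    intro j
    have := congrFun hc j
    simpa using this
  -- set-up
  set S : Finset (Fin r) := Finset.univ.filter (fun i => (f i : ℕ) < k - r) with hSdef
  set n := S.card with hn
  have hemb : ∀ x : Fin (k - r), (x : ℕ) < k := fun x => lt_of_lt_of_le x.2 (Nat.sub_le k r)
  set emb : Fin (k - r) → Fin k := fun x => ⟨(x : ℕ), hemb x⟩ with hembdef
  have : Nonempty (Fin r) := ⟨⟨0, hr⟩⟩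
  obtain ⟨f', hf'⟩ := hf.hasLeftInverse
  set mk : {i // i ∈ S} → Fin (k - r) :=
    fun a => ⟨(f a.1 : ℕ), (Finset.mem_filter.mp a.2).2⟩ with hmkdef
  have hmkinj : Function.Injective mk := by
    intro a b hab
    simp only [hmkdef, Fin.mk.injEq] at hab
    exact Subtype.ext (hf (Fin.ext hab))
  set Rset : Finset (Fin (k - r)) := S.attach.image mk with hRsetdef
  have hRcard : Rset.card = n := by
    rw [hRsetdef, Finset.card_image_of_injective _ hmkinj, Finset.card_attach]
  -- columns
  set gj : Fin r → Fin r := fun i => ⟨(f i : ℕ) - (k - r), by have := (f i).2; omega⟩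
    with hgjdef
  set G : Finset (Fin r) := (Finset.univ.filter (fun i => ¬ (f i : ℕ) < k - r)).image gj
    with hGdef
  have hnn : n = (Finset.univ.filter (fun i => (f i : ℕ) < k - r)).card := hn
  have hsplit : (Finset.univ.filter (fun i => (f i : ℕ) < k - r)).card
      + (Finset.univ.filter (fun i => ¬ (f i : ℕ) < k - r)).card = r := by
    have := Finset.card_filter_add_card_filter_not
      (s := (Finset.univ : Finset (Fin r))) (p := fun i => (f i : ℕ) < k - r)
    simpa using this
  have hGcard : G.card = r - n := by
    rw [hGdef, Finset.card_image_of_injOn]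
    · omega
    · intro a ha b hb hab
      have ha' := (Finset.mem_filter.mp ha).2
      have hb' := (Finset.mem_filter.mp hb).2
      have : (f a : ℕ) = (f b : ℕ) := by
        have h2 := congrArg Fin.val hab
        simp only [hgjdef] at h2
        omega
      exact hf (Fin.ext this)
  have hnr : n ≤ r := by omega
  set C : Finset (Fin r) := Finset.univ \ G with hCdef
  have hCcard : C.card = n := by
    rw [hCdef, Finset.card_sdiff_of_subset (Finset.subset_univ G), hGcard, Finset.card_univ,
      Fintype.card_fin]
    omega
  -- enumerations
  set ρi := Rset.orderIsoOfFin hRcard with hρi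
  set γi := C.orderIsoOfFin hCcard with hγi
  set ρ' : Fin n → Fin (k - r) := fun t => (ρi t : Fin (k - r)) with hρ'
  set γ' : Fin n → Fin r := fun u => (γi u : Fin r) with hγ'
  have hρmono : StrictMono (fun t => ((ρ' t : Fin (k - r)) : ℕ)) := by
    intro a b h
    exact Subtype.coe_lt_coe.2 (ρi.strictMono h)
  have hγmono : StrictMono (fun u => ((γ' u : Fin r) : ℕ)) := by
    intro a b h
    exact Subtype.coe_lt_coe.2 (γi.strictMono h)
  set B : Matrix (Fin n) (Fin n) K := fun t u => A (ρ' t) (γ' u) with hB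
  have hdet : B.det ≠ 0 := by
    refine key_det L hL n _ _ hρmono hγmono B (fun t u => hAmem _ _)
      (fun t u h => hAnot _ _ h) (fun t u h => hAne _ _ h)
  -- the vector
  set d : Fin n → K := fun t => c (f' (emb (ρ' t))) with hd
  -- entries of stackId for identity rows at C-columns vanish
  have hvec : ∀ u : Fin n, ∑ t : Fin n, d t * B t u = 0 := by
    intro u
    have h0 := hcol (γ' u)
    rw [← Finset.sum_filter_add_sum_filter_not Finset.univ
      (fun i => (f i : ℕ) < k - r)] at h0
    have hT : ∑ i ∈ Finset.univ.filter (fun i => ¬ (f i : ℕ) < k - r),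
        c i * stackId k r A (f i) (γ' u) = 0 := by
      refine Finset.sum_eq_zero fun i hi => ?_
      have hi' := (Finset.mem_filter.mp hi).2
      have hz : stackId k r A (f i) (γ' u) = 0 := by
        simp only [stackId, Matrix.of_apply]
        rw [dif_neg hi', if_neg]
        intro heq
        have hmem : (γ' u) ∈ G := by
          rw [hGdef]
          exact Finset.mem_image.mpr ⟨i, hi, Fin.ext (by simp only [hgjdef]; omega)⟩
        have hmem' : (γ' u) ∈ C := (γi u).2
        rw [hCdef] at hmem'
        exact (Finset.mem_sdiff.mp hmem').2 hmem
      rw [hz, mul_zero]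
    rw [hT, add_zero] at h0
    rw [← h0]
    -- reindex
    calc ∑ t : Fin n, d t * B t u
        = ∑ x : {x // x ∈ Rset}, c (f' (emb x.1)) * A x.1 (γ' u) :=
          Fintype.sum_equiv ρi.toEquiv _ _ (fun t => rfl)
      _ = ∑ x ∈ Rset, c (f' (emb x)) * A x (γ' u) :=
          Finset.sum_coe_sort Rset (fun x => c (f' (emb x)) * A x (γ' u))
      _ = ∑ a ∈ S.attach, c (f' (emb (mk a))) * A (mk a) (γ' u) := by
          rw [hRsetdef]
          exact Finset.sum_image (fun a _ b _ hab => hmkinj hab)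
      _ = ∑ a ∈ S.attach, c a.1 * stackId k r A (f a.1) (γ' u) := by
          refine Finset.sum_congr rfl fun a _ => ?_
          have h1 : emb (mk a) = f a.1 := Fin.ext rfl
          have h2 : stackId k r A (f a.1) (γ' u) = A (mk a) (γ' u) := by
            simp only [stackId, Matrix.of_apply]
            rw [dif_pos (Finset.mem_filter.mp a.2).2]
          rw [h1, hf', h2]
      _ = ∑ i ∈ S, c i * stackId k r A (f i) (γ' u) :=
          Finset.sum_attach S (fun i => c i * stackId k r A (f i) (γ' u))
  have hd0 : d = 0 :=
    Matrix.eq_zero_of_vecMul_eq_zero hdet (funext fun u => hvec u)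
  -- c vanishes on S
  have hS0 : ∀ i, (f i : ℕ) < k - r → c i = 0 := by
    intro i hi
    have hiS : i ∈ S := by rw [hSdef]; simp [hi]
    have hmem : (⟨(f i : ℕ), hi⟩ : Fin (k - r)) ∈ Rset := by
      rw [hRsetdef]
      exact Finset.mem_image.mpr ⟨⟨i, hiS⟩, Finset.mem_attach _ _, Fin.ext rfl⟩
    set t₀ := ρi.symm ⟨⟨(f i : ℕ), hi⟩, hmem⟩ with ht₀
    have h1 : ρ' t₀ = ⟨(f i : ℕ), hi⟩ := by
      rw [hρ', ht₀]
      exact congrArg Subtype.val (ρi.apply_symm_apply _)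
    have h2 : d t₀ = c i := by
      show c (f' (emb (ρ' t₀))) = c i
      rw [h1]
      have h3 : emb ⟨(f i : ℕ), hi⟩ = f i := Fin.ext rfl
      rw [h3]
      exact congrArg c (hf' i)
    rw [← h2, hd0]; rfl
  -- all of c vanishes
  intro i
  by_cases hi : (f i : ℕ) < k - r
  · exact hS0 i hi
  · have h0 := hcol (gj i)
    have hsum : ∀ i' : Fin r, c i' * stackId k r A (f i') (gj i)
        = if i' = i then c i' else 0 := by
      intro i'
      by_cases hii : i' = i
      · subst hii
        have : stackId k r A (f i') (gj i') = 1 := by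
          simp only [stackId, Matrix.of_apply]
          rw [dif_neg hi, if_pos]
          show (f i' : ℕ) = k - r + ((f i' : ℕ) - (k - r))
          omega
        rw [this, mul_one, if_pos rfl]
      · rw [if_neg hii]
        by_cases hi' : (f i' : ℕ) < k - r
        · rw [hS0 i' hi', zero_mul]
        · have : stackId k r A (f i') (gj i) = 0 := by
            simp only [stackId, Matrix.of_apply]
            rw [dif_neg hi', if_neg]
            intro heq
            have heq' : (f i' : ℕ) = k - r + ((f i : ℕ) - (k - r)) := heq
            exact hii (hf (Fin.ext (by omega)))
          rw [this, mul_zero]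
    rw [Finset.sum_congr rfl (fun i' _ => hsum i')] at h0
    rw [Finset.sum_ite_eq' Finset.univ i c] at h0
    simpa using h0
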